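/- Let C be a tree with parallel hole positions w₁,…,w_r and (t_i)_{i∈ℕ} pairwise distinct trees. Write C_{kh} for C with t_k at hole w₁ and t_h at holes w₂,…,w_r. Suppose u, v are parallel positions with C_{kh}|_u = C_{kh}|_v for all k < h, u is a prefix of w₁ or extends w₁, and v is parallel to w₁. Then u cannot be a (weak) prefix of w₁; i.e. w₁ ≤ u. -/

import Mathlib

inductive RTree (α : Type) : Type where
  | node : α → List (RTree α) → RTree α

namespace RTree

variable {α : Type}

def size : RTree α → ℕ
  | node _ ts => 1 + (ts.attach.map (fun t => size t.1)).sum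
decreasing_by
  simp only [RTree.node.sizeOf_spec]
  have := List.sizeOf_lt_of_mem t.2
  omega


def height : RTree α → ℕ
  | node _ ts => (ts.attach.map (fun t => height t.1 + 1)).foldr max 0
decreasing_by
  simp only [RTree.node.sizeOf_spec]
  have := List.sizeOf_lt_of_mem t.2
  omega


inductive IsPos : RTree α → List ℕ → Prop
  | nil (t : RTree α) : IsPos t []
  | cons {a : α} {ts : List (RTree α)} {i : ℕ} {p : List ℕ} (h : i < ts.length) :
      IsPos ts[i] p → IsPos (node a ts) (i :: p)

inductive SubtreeAt : RTree α → List ℕ → RTree α → Prop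
  | nil (t : RTree α) : SubtreeAt t [] t
  | cons {a : α} {ts : List (RTree α)} {i : ℕ} {p : List ℕ} {u : RTree α} (h : i < ts.length) :
      SubtreeAt ts[i] p u → SubtreeAt (node a ts) (i :: p) u

inductive WellRanked (rk : α → ℕ) : RTree α → Prop
  | node {a : α} {ts : List (RTree α)} : ts.length = rk a →
      (∀ t ∈ ts, WellRanked rk t) → WellRanked rk (node a ts)

end RTree

instance {α : Type} [Inhabited α] : Inhabited (RTree α) := ⟨.node default []⟩

def substVars {δ : Type} (f : ℕ → RTree δ) : RTree (Sum δ ℕ) → RTree δ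
  | .node (.inl d) ts => .node d (ts.attach.map (fun t => substVars f t.1))
  | .node (.inr i) _ => f i
decreasing_by
  simp only [RTree.node.sizeOf_spec]
  have := List.sizeOf_lt_of_mem t.2
  omega


def applyHom {σ δ : Type} [Inhabited δ] (h' : σ → RTree (Sum δ ℕ)) : RTree σ → RTree δ
  | .node a ts =>
      substVars (fun i => (ts.attach.map (fun t => applyHom h' t.1)).getD i default) (h' a)
decreasing_by
  simp only [RTree.node.sizeOf_spec]
  have := List.sizeOf_lt_of_mem t.2
  omega


def HasVar {δ : Type} (u : RTree (Sum δ ℕ)) (i : ℕ) : Prop :=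
  ∃ p l, RTree.SubtreeAt u p (.node (.inr i) l)

def Nondeleting {σ δ : Type} (rk : σ → ℕ) (h' : σ → RTree (Sum δ ℕ)) : Prop :=
  ∀ (a : σ) (i : ℕ), i < rk a ↔ HasVar (h' a) i

def Nonerasing {σ δ : Type} (h' : σ → RTree (Sum δ ℕ)) : Prop :=
  ∀ (a : σ) (i : ℕ) (l : List (RTree (Sum δ ℕ))), h' a ≠ .node (.inr i) l

def TetrisFree {σ δ : Type} [Inhabited δ] (rk : σ → ℕ) (h' : σ → RTree (Sum δ ℕ)) : Prop :=
  Nondeleting rk h' ∧ Nonerasing h' ∧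
  ∀ s s' : RTree σ, RTree.WellRanked rk s → RTree.WellRanked rk s' →
    applyHom h' s = applyHom h' s' →
    (∀ p, RTree.IsPos s p ↔ RTree.IsPos s' p) ∧
    (∀ p a l a' l', RTree.SubtreeAt s p (.node a l) → RTree.SubtreeAt s' p (.node a' l') →
      h' a = h' a')

inductive Fills {δ : Type} : RTree (Sum δ Unit) → (List ℕ → RTree δ) → RTree δ → Prop
  | hole {l : List (RTree (Sum δ Unit))} (f : List ℕ → RTree δ) :
      Fills (.node (.inr ()) l) f (f [])
  | node {d : δ} {ts : List (RTree (Sum δ Unit))} {f : List ℕ → RTree δ} {us : List (RTree δ)}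
      (h : ts.length = us.length)
      (hc : ∀ (i : ℕ) (hi : i < ts.length), Fills ts[i] (fun p => f (i :: p)) (us[i]'(h ▸ hi))) :
      Fills (.node (.inl d) ts) f (.node d us)

def Par (p q : List ℕ) : Prop := ¬ p <+: q ∧ ¬ q <+: p

def HoleAt {δ : Type} (C : RTree (Sum δ Unit)) (p : List ℕ) : Prop :=
  ∃ l, RTree.SubtreeAt C p (RTree.node (Sum.inr ()) l)

section Aux

variable {δ : Type}

theorem subtreeAt_unique {t : RTree δ} {p : List ℕ} {y y' : RTree δ}
    (h : RTree.SubtreeAt t p y) : RTree.SubtreeAt t p y' → y = y' := by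
  induction h with
  | nil =>
    intro h'
    cases h'
    rfl
  | cons hi hs ih =>
    intro h'
    cases h' with
    | cons hi' hs' => exact ih hs'

theorem subtreeAt_append {t y z : RTree δ} : ∀ {p q : List ℕ},
    RTree.SubtreeAt t p y → RTree.SubtreeAt y q z → RTree.SubtreeAt t (p ++ q) z := by
  intro p q h
  induction h with
  | nil => exact fun h => h
  | cons hi _ ih => exact fun h => RTree.SubtreeAt.cons hi (ih h)

theorem subtreeAt_append_inv {t y z : RTree δ} : ∀ {p q : List ℕ},
    RTree.SubtreeAt t p y → RTree.SubtreeAt t (p ++ q) z → RTree.SubtreeAt y q z := by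
  intro p q h
  induction h with
  | nil => exact fun h => h
  | cons hi _ ih =>
    intro h
    cases h with
    | cons hi' hs' => exact ih hs'

theorem holeAt_cons {a : Sum δ Unit} {ts : List (RTree (Sum δ Unit))} {i : ℕ}
    (hi : i < ts.length) {q : List ℕ} (h : HoleAt ts[i] q) :
    HoleAt (RTree.node a ts) (i :: q) := by
  obtain ⟨l, hl⟩ := h
  exact ⟨l, RTree.SubtreeAt.cons hi hl⟩

theorem fills_exists : ∀ (C : RTree (Sum δ Unit)) (f : List ℕ → RTree δ),
    ∃ X, Fills C f X
  | .node (.inr ()) l, f => ⟨f [], Fills.hole f⟩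
  | .node (.inl d) ts, f => by
    choose us hus using fun (i : Fin ts.length) =>
      fills_exists ts[i.1] (fun p => f (i.1 :: p))
    refine ⟨.node d (List.ofFn us), Fills.node (by simp) ?_⟩
    intro i hi
    have := hus ⟨i, hi⟩
    simpa using this
decreasing_by
  all_goals
    simp only [RTree.node.sizeOf_spec]
    have h1 : ts[i.1] ∈ ts := List.getElem_mem _
    have := List.sizeOf_lt_of_mem h1
    omega

theorem fills_unique {C : RTree (Sum δ Unit)} {f : List ℕ → RTree δ} {X : RTree δ}
    (h : Fills C f X) : ∀ (f' : List ℕ → RTree δ) (X' : RTree δ), Fills C f' X' →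
    (∀ q, HoleAt C q → f q = f' q) → X = X' := by
  induction h with
  | hole f =>
    intro f' X' h' hq
    cases h' with
    | hole => exact hq [] ⟨_, RTree.SubtreeAt.nil _⟩
  | @node d ts f us hlen hc ih =>
    intro f' X' h' hq
    cases h' with
    | @node _ _ _ us' hlen' hc' =>
      congr 1
      apply List.ext_getElem (by omega)
      intro i h1 h2
      exact ih i (by omega) _ _ (hc' i (by omega))
        (fun q hq' => hq (i :: q) (holeAt_cons (by omega) hq'))

theorem fills_subtree {C : RTree (Sum δ Unit)} {f : List ℕ → RTree δ} {X : RTree δ}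
    (h : Fills C f X) : ∀ (p : List ℕ) (l : List (RTree (Sum δ Unit))),
    RTree.SubtreeAt C p (.node (.inr ()) l) →
    (∀ q q', HoleAt C q → HoleAt C q' → q <+: q' → q = q') →
    RTree.SubtreeAt X p (f p) := by
  induction h with
  | @hole l₀ f =>
    intro p l hsub hp
    have : ([] : List ℕ) = p := hp [] p ⟨l₀, RTree.SubtreeAt.nil _⟩ ⟨l, hsub⟩ (List.nil_prefix)
    subst this
    exact RTree.SubtreeAt.nil _
  | @node d ts f us hlen hc ih =>
    intro p l hsub hp
    cases hsub with
    | cons hi hs =>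
      rename_i i p'
      refine RTree.SubtreeAt.cons (by omega) ?_
      have := ih i hi p' l hs ?_
      · convert this using 2 <;> omega
      · intro q q' hq hq' hpre
        have := hp (i :: q) (i :: q') (holeAt_cons hi hq) (holeAt_cons hi hq')
          (by simpa [List.cons_prefix_cons] using hpre)
        simpa using this

theorem subtree_eq : ∀ (v : List ℕ) {C : RTree (Sum δ Unit)} {f f' : List ℕ → RTree δ}
    {X X' Y Y' : RTree δ}, Fills C f X → Fills C f' X' →
    (∀ q, HoleAt C q → (q <+: v ∨ v <+: q) → f q = f' q) →
    RTree.SubtreeAt X v Y → RTree.SubtreeAt X' v Y' → Y = Y' := by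
  intro v
  induction v with
  | nil =>
    intro C f f' X X' Y Y' hF hF' hq hY hY'
    cases hY; cases hY'
    exact fills_unique hF f' X' hF' (fun q hq' => hq q hq' (Or.inr (List.nil_prefix)))
  | cons i v' ih =>
    intro C f f' X X' Y Y' hF hF' hq hY hY'
    cases hF with
    | hole =>
      cases hF' with
      | hole =>
        have : f [] = f' [] :=
          hq [] ⟨_, RTree.SubtreeAt.nil _⟩ (Or.inl (List.nil_prefix))
        rw [this] at hY
        exact subtreeAt_unique hY hY'
    | @node d ts f us hlen hc =>
      cases hF' with
      | @node _ _ _ us' hlen' hc' =>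
        cases hY with
        | cons hi hs =>
          cases hY' with
          | cons hi' hs' =>
            have hF1 := hc i (by omega)
            have hF2 := hc' i (by omega)
            exact ih hF1 hF2 (fun q hq' hpre => hq (i :: q) (holeAt_cons (by omega) hq')
              (by simpa [List.cons_prefix_cons] using hpre)) hs hs' 

end Aux

/-- if u is in prefix-relation with the hole w₁, v is parallel to w₁, and
C_{kh}|_u = C_{kh}|_v for all k < h, then u cannot be a prefix of w₁, i.e. w₁ ≤ u. -/
theorem stmt13 {δ : Type} (C : RTree (Sum δ Unit))
    (w : List (List ℕ)) (hw : w ≠ [])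
    (hholes : ∀ p, HoleAt C p ↔ p ∈ w) (hpar : w.Pairwise Par)
    (t : ℕ → RTree δ) (ht : Function.Injective t)
    (u v : List ℕ) (huv : Par u v)
    (hu : u <+: w.head hw ∨ w.head hw <+: u) (hv : Par v (w.head hw))
    (heq : ∀ k h : ℕ, k < h →
      ∀ X, Fills C (fun p => if p = w.head hw then t k else t h) X →
        ∃ s, RTree.SubtreeAt X u s ∧ RTree.SubtreeAt X v s) :
    w.head hw <+: u := by
  rcases hu with hu | hu
  · -- u <+: w₁ : derive a contradiction
    exfalso
    set w₁ := w.head hw with hw₁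
    obtain ⟨s', hs'⟩ := hu
    have hw₁mem : w₁ ∈ w := List.head_mem hw
    have hole₁ : HoleAt C w₁ := (hholes w₁).mpr hw₁mem
    obtain ⟨l₁, hsub₁⟩ := hole₁
    have hparC : ∀ q q', HoleAt C q → HoleAt C q' → q <+: q' → q = q' := by
      intro q q' hq hq' hpre
      by_contra hne
      have hsymm : Symmetric Par := fun a b h => ⟨h.2, h.1⟩
      have := (haveI : Std.Symm Par := ⟨fun a b h => hsymm h⟩; hpar.forall) ((hholes q).mp hq) ((hholes q').mp hq') hne
      exact this.1 hpre
    obtain ⟨X₀, hF₀⟩ := fills_exists C (fun p => if p = w₁ then t 0 else t 2)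
    obtain ⟨X₁, hF₁⟩ := fills_exists C (fun p => if p = w₁ then t 1 else t 2)
    obtain ⟨s₀, hu₀, hv₀⟩ := heq 0 2 (by norm_num) X₀ hF₀
    obtain ⟨s₁, hu₁, hv₁⟩ := heq 1 2 (by norm_num) X₁ hF₁
    have hs₀ : RTree.SubtreeAt s₀ s' (t 0) := by
      have h1 : RTree.SubtreeAt X₀ w₁ (t 0) := by
        have := fills_subtree hF₀ w₁ l₁ hsub₁ hparC
        simpa using this
      rw [← hs'] at h1
      exact subtreeAt_append_inv hu₀ h1
    have hs₁ : RTree.SubtreeAt s₁ s' (t 1) := by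
      have h1 : RTree.SubtreeAt X₁ w₁ (t 1) := by
        have := fills_subtree hF₁ w₁ l₁ hsub₁ hparC
        simpa using this
      rw [← hs'] at h1
      exact subtreeAt_append_inv hu₁ h1
    have hvv : ∀ q, HoleAt C q → (q <+: v ∨ v <+: q) →
        (if q = w₁ then t 0 else t 2) = (if q = w₁ then t 1 else t 2) := by
      intro q hq hc
      have hne : q ≠ w₁ := by
        rintro rfl
        rcases hc with h | h
        · exact hv.2 h
        · exact hv.1 h
      simp [hne]
    have hss : s₀ = s₁ := subtree_eq v hF₀ hF₁ hvv hv₀ hv₁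
    rw [hss] at hs₀
    have := ht (subtreeAt_unique hs₀ hs₁)
    exact absurd this (by norm_num)
  · exact hu
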